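/- Let G be a finite nilpotent group. Then every non-cyclic subgroup H of G has an ES-partition for some subgroup S of H. -/

import Mathlib

/-- A strict `S`-partition of a group `G`: a finite collection of at least two proper
subgroups of `G` covering `G`, any two distinct members of which intersect exactly in `S`. -/
def IsStrictPartition {G : Type*} [Group G] (S : Subgroup G) (P : Finset (Subgroup G)) : Prop :=
  2 ≤ P.card ∧ (∀ H ∈ P, H ≠ ⊤) ∧ (∀ g : G, ∃ H ∈ P, g ∈ H) ∧
    ∀ H ∈ P, ∀ K ∈ P, H ≠ K → H ⊓ K = S

/-- An `ES`-partition: a strict `S`-partition all of whose components have the same order. -/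
def IsESPartition {G : Type*} [Group G] (S : Subgroup G) (P : Finset (Subgroup G)) : Prop :=
  IsStrictPartition S P ∧ ∀ H ∈ P, ∀ K ∈ P, Nat.card H = Nat.card K

section Aux

variable {K : Type*} [Group K]

open scoped commutatorElement Function

/-- A group all of whose subgroups are trivial is cyclic. -/
lemma my_isCyclic_of_subgroups_trivial (h : ∀ L : Subgroup K, L = ⊥ ∨ L = ⊤) : IsCyclic K := by
  by_cases hx : ∃ x : K, x ≠ 1
  · obtain ⟨x, hx⟩ := hx
    refine ⟨x, fun y => ?_⟩
    rcases h (Subgroup.zpowers x) with h' | h'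
    · exact absurd (Subgroup.mem_bot.mp (h' ▸ Subgroup.mem_zpowers x)) hx
    · exact (Subgroup.eq_top_iff' _).mp h' y
  · push_neg at hx
    refine ⟨1, fun y => ?_⟩
    have hy : y ∈ Subgroup.zpowers (1 : K) := by rw [hx y]; exact Subgroup.one_mem _
    exact hy

lemma my_subgroup_eq_bot_or_top_of_coatom {M : Subgroup K} [M.Normal] (hM : IsCoatom M)
    (L : Subgroup (K ⧸ M)) : L = ⊥ ∨ L = ⊤ := by
  have hsurj : Function.Surjective (QuotientGroup.mk' M) := QuotientGroup.mk'_surjective M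
  have hle : M ≤ Subgroup.comap (QuotientGroup.mk' M) L := by
    intro x hx
    have hx1 : (QuotientGroup.mk' M) x = 1 := by
      rw [← MonoidHom.mem_ker, QuotientGroup.ker_mk']; exact hx
    show (QuotientGroup.mk' M) x ∈ L
    rw [hx1]
    exact L.one_mem
  have hmap : Subgroup.map (QuotientGroup.mk' M) (Subgroup.comap (QuotientGroup.mk' M) L) = L := by
    rw [Subgroup.map_comap_eq, MonoidHom.range_eq_top.mpr hsurj, top_inf_eq]
  rcases hle.lt_or_eq with h' | h'
  · right
    rw [← hmap, hM.2 _ h', ← MonoidHom.range_eq_map, MonoidHom.range_eq_top.mpr hsurj]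
  · left
    rw [← hmap, ← h', eq_bot_iff]
    rintro y ⟨x, hx, rfl⟩
    simpa [Subgroup.mem_bot] using (QuotientGroup.eq_one_iff x).mpr hx

lemma my_commutator_le_frattini [Finite K] [Group.IsNilpotent K] :
    commutator K ≤ frattini K := by
  have htfae : Group.IsNilpotent K ↔ ∀ M : Subgroup K, IsCoatom M → M.Normal :=
    (isNilpotent_of_finite_tfae (G := K)).out 0 2
  have hnorm : ∀ M : Subgroup K, IsCoatom M → M.Normal := htfae.mp inferInstance
  show commutator K ≤ Order.radical (Subgroup K)
  unfold Order.radical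
  refine le_iInf fun M => le_iInf fun hM => ?_
  haveI := hnorm M hM
  have hc : IsCyclic (K ⧸ M) :=
    my_isCyclic_of_subgroups_trivial (my_subgroup_eq_bot_or_top_of_coatom hM)
  letI := hc.commGroup
  rw [commutator_def, Subgroup.commutator_le]
  intro g _ h _
  have : (QuotientGroup.mk' M) ⁅g, h⁆ = 1 := by
    rw [map_commutatorElement]
    exact commutatorElement_eq_one_iff_commute.mpr (mul_comm _ _)
  rwa [← MonoidHom.mem_ker, QuotientGroup.ker_mk'] at this

lemma my_frattini_quotient_comm [Finite K] [Group.IsNilpotent K]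
    (a b : K ⧸ frattini K) : a * b = b * a := by
  obtain ⟨g, rfl⟩ := QuotientGroup.mk_surjective a
  obtain ⟨h, rfl⟩ := QuotientGroup.mk_surjective b
  rw [← QuotientGroup.mk_mul, ← QuotientGroup.mk_mul, QuotientGroup.eq]
  have : ⁅h⁻¹, g⁻¹⁆ ∈ frattini K :=
    my_commutator_le_frattini
      (Subgroup.commutator_mem_commutator (Subgroup.mem_top _) (Subgroup.mem_top _))
  simpa [commutatorElement_def, mul_assoc] using this

lemma my_not_isCyclic_quotient_frattini [Finite K] (h : ¬IsCyclic K) :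
    ¬IsCyclic (K ⧸ frattini K) := by
  haveI : Finite (Subgroup K) := Finite.of_injective _ SetLike.coe_injective
  intro hc
  obtain ⟨a, ha⟩ := hc.exists_generator
  obtain ⟨x, rfl⟩ := QuotientGroup.mk_surjective a
  apply h
  have htop : Subgroup.zpowers x ⊔ frattini K = ⊤ := by
    have hmap : Subgroup.map (QuotientGroup.mk' (frattini K)) (Subgroup.zpowers x) = ⊤ := by
      rw [MonoidHom.map_zpowers]
      exact (Subgroup.eq_top_iff' _).mpr ha
    have hcg := congrArg (Subgroup.comap (QuotientGroup.mk' (frattini K))) hmap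
    rwa [Subgroup.comap_map_eq, QuotientGroup.ker_mk', Subgroup.comap_top] at hcg
  have hgen := frattini_nongenerating htop
  exact ⟨x, fun y => (Subgroup.eq_top_iff' _).mp hgen y⟩

lemma my_nat_prod_dvd {ι : Type} (t : Finset ι) (f : ι → ℕ) (z : ℕ)
    (hcop : (t : Set ι).Pairwise (Nat.Coprime on f)) (hdvd : ∀ i ∈ t, f i ∣ z) :
    (∏ i ∈ t, f i) ∣ z := by
  classical
  induction t using Finset.induction_on with
  | empty => simp
  | @insert a s ha ih =>
    rw [Finset.prod_insert ha]
    have hcop' : Nat.Coprime (f a) (∏ i ∈ s, f i) := by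
      apply Nat.Coprime.prod_right
      intro i hi
      exact hcop (Finset.mem_insert_self a s) (Finset.mem_insert_of_mem hi)
        (fun h' => ha (h' ▸ hi))
    exact hcop'.mul_dvd_of_dvd_of_dvd (hdvd a (Finset.mem_insert_self a s))
      (ih (hcop.mono (by simp [Set.subset_insert])) fun i hi => hdvd i (Finset.mem_insert_of_mem hi))

lemma my_isCyclic_pi_zmod {ι : Type} [Fintype ι] (n : ι → ℕ) (h1 : ∀ i, 1 < n i)
    (hcop : Pairwise (Nat.Coprime on n)) :
    IsCyclic (∀ i, Multiplicative (ZMod (n i))) := by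
  haveI : ∀ i, NeZero (n i) := fun i => ⟨by have := h1 i; omega⟩
  apply IsCyclic.of_exponent_eq_card
  rw [Monoid.exponent_pi, Nat.card_pi]
  have hexp : ∀ i, Monoid.exponent (Multiplicative (ZMod (n i))) = n i := by
    intro i
    rw [IsCyclic.exponent_eq_card]
    exact Nat.card_zmod (n i)
  have hcard : ∀ i, Nat.card (Multiplicative (ZMod (n i))) = n i := fun i => Nat.card_zmod (n i)
  simp only [hexp, hcard]
  apply Nat.dvd_antisymm
  · exact Finset.lcm_dvd fun i _ => Finset.dvd_prod_of_mem n (Finset.mem_univ i)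
  · exact my_nat_prod_dvd _ _ _ (hcop.set_pairwise _)
      fun i _ => Finset.dvd_lcm (Finset.mem_univ i)

lemma my_exists_surjection [Finite K] [Group.IsNilpotent K] (h : ¬IsCyclic K) :
    ∃ p : ℕ, p.Prime ∧ ∃ φ : K →* Multiplicative (ZMod p) × Multiplicative (ZMod p),
      Function.Surjective φ := by
  classical
  letI : CommGroup (K ⧸ frattini K) :=
    { (inferInstance : Group (K ⧸ frattini K)) with mul_comm := my_frattini_quotient_comm }
  obtain ⟨ι, hι, n, h1, ⟨eA⟩⟩ :=
    CommGroup.equiv_prod_multiplicative_zmod_of_finite (K ⧸ frattini K)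
  have hAnc : ¬IsCyclic (K ⧸ frattini K) := my_not_isCyclic_quotient_frattini h
  have hPinc : ¬IsCyclic (∀ i, Multiplicative (ZMod (n i))) := by
    intro hc
    exact hAnc (isCyclic_of_surjective eA.symm eA.symm.surjective)
  have hncop : ¬ Pairwise (Nat.Coprime on n) := fun hcop => hPinc (my_isCyclic_pi_zmod n h1 hcop)
  rw [Pairwise] at hncop
  push_neg at hncop
  obtain ⟨i, j, hij, hncopij⟩ := hncop
  obtain ⟨p, hp, hpd⟩ := Nat.exists_prime_and_dvd hncopij
  have hdi : p ∣ n i := hpd.trans (Nat.gcd_dvd_left _ _)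
  have hdj : p ∣ n j := hpd.trans (Nat.gcd_dvd_right _ _)
  haveI : NeZero (n i) := ⟨by have := h1 i; omega⟩
  haveI : NeZero (n j) := ⟨by have := h1 j; omega⟩
  haveI : NeZero p := ⟨hp.ne_zero⟩
  refine ⟨p, hp, ?_⟩
  let fi : Multiplicative (ZMod (n i)) →* Multiplicative (ZMod p) :=
    AddMonoidHom.toMultiplicative (ZMod.castHom hdi (ZMod p)).toAddMonoidHom
  let fj : Multiplicative (ZMod (n j)) →* Multiplicative (ZMod p) :=
    AddMonoidHom.toMultiplicative (ZMod.castHom hdj (ZMod p)).toAddMonoidHom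
  have hfi : Function.Surjective fi := by
    intro a
    refine ⟨Multiplicative.ofAdd ((a.toAdd.val : ℕ) : ZMod (n i)), ?_⟩
    show Multiplicative.ofAdd ((ZMod.castHom hdi (ZMod p)) ((a.toAdd.val : ℕ) : ZMod (n i))) = a
    rw [map_natCast, ZMod.natCast_val, ZMod.cast_id]
    rfl
  have hfj : Function.Surjective fj := by
    intro a
    refine ⟨Multiplicative.ofAdd ((a.toAdd.val : ℕ) : ZMod (n j)), ?_⟩
    show Multiplicative.ofAdd ((ZMod.castHom hdj (ZMod p)) ((a.toAdd.val : ℕ) : ZMod (n j))) = a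
    rw [map_natCast, ZMod.natCast_val, ZMod.cast_id]
    rfl
  let ψ : (∀ k, Multiplicative (ZMod (n k))) →* Multiplicative (ZMod p) × Multiplicative (ZMod p) :=
    (fi.comp (Pi.evalMonoidHom _ i)).prod (fj.comp (Pi.evalMonoidHom _ j))
  have hψ : Function.Surjective ψ := by
    rintro ⟨a, b⟩
    obtain ⟨xa, hxa⟩ := hfi a
    obtain ⟨xb, hxb⟩ := hfj b
    refine ⟨Function.update (Function.update (1 : ∀ k, Multiplicative (ZMod (n k))) i xa) j xb,
      Prod.ext ?_ ?_⟩
    · show fi (Function.update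
          (Function.update (1 : ∀ k, Multiplicative (ZMod (n k))) i xa) j xb i) = a
      rw [Function.update_of_ne hij, Function.update_self, hxa]
    · show fj (Function.update
          (Function.update (1 : ∀ k, Multiplicative (ZMod (n k))) i xa) j xb j) = b
      rw [Function.update_self, hxb]
  refine ⟨ψ.comp ((eA : (K ⧸ frattini K) →* _).comp (QuotientGroup.mk' (frattini K))), ?_⟩
  intro t
  obtain ⟨u, hu⟩ := hψ t
  obtain ⟨a, ha⟩ := eA.surjective u
  obtain ⟨k, hk⟩ := QuotientGroup.mk'_surjective (frattini K) a
  refine ⟨k, ?_⟩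
  simp only [MonoidHom.comp_apply, hk]
  rw [show ((eA : (K ⧸ frattini K) →* _) a) = eA a from rfl, ha, hu]

lemma my_exists_ESPartition [Finite K] [Group.IsNilpotent K] (h : ¬IsCyclic K) :
    ∃ (S : Subgroup K) (P : Finset (Subgroup K)), IsESPartition S P := by
  classical
  obtain ⟨p, hp, φ, hφ⟩ := my_exists_surjection h
  haveI : NeZero p := ⟨hp.ne_zero⟩
  set T := Multiplicative (ZMod p) × Multiplicative (ZMod p) with hT
  have hcardT : Nat.card T = p * p := by
    rw [Nat.card_prod]
    have : Nat.card (Multiplicative (ZMod p)) = p := Nat.card_zmod p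
    rw [this]
  have hpow : ∀ t : T, t ^ p = 1 := by
    intro t
    have h1 : ∀ x : Multiplicative (ZMod p), x ^ p = 1 := by
      intro x
      apply Multiplicative.toAdd.injective
      show p • x.toAdd = 0
      rw [nsmul_eq_mul, ZMod.natCast_self, zero_mul]
    exact Prod.ext (by rw [Prod.pow_fst]; exact h1 t.1) (by rw [Prod.pow_snd]; exact h1 t.2)
  have horder : ∀ t : T, t ≠ 1 → Nat.card (Subgroup.zpowers t) = p := by
    intro t ht
    rw [Nat.card_zpowers]
    rcases (Nat.dvd_prime hp).mp (orderOf_dvd_of_pow_eq_one (hpow t)) with h1 | h1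
    · exact absurd (orderOf_eq_one_iff.mp h1) ht
    · exact h1
  haveI : Finite (Subgroup T) := Finite.of_injective _ SetLike.coe_injective
  haveI := Fintype.ofFinite (Subgroup T)
  set PT : Finset (Subgroup T) := Finset.univ.filter (fun L => Nat.card L = p) with hPT
  set P : Finset (Subgroup K) := PT.image (Subgroup.comap φ) with hP
  have hinj : Function.Injective (Subgroup.comap φ : Subgroup T → Subgroup K) :=
    Subgroup.comap_injective hφ
  have hppn : p * p ≠ p := by
    have := hp.one_lt
    nlinarith
  -- two distinct lines
  have hT1 : Nontrivial T := by
    have h1 : 1 < Nat.card T := by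
      rw [hcardT]; nlinarith [hp.one_lt]
    exact Finite.one_lt_card_iff_nontrivial.mp h1
  obtain ⟨x, hx⟩ := exists_ne (1 : T)
  have hL1 : Subgroup.zpowers x ∈ PT := Finset.mem_filter.mpr ⟨Finset.mem_univ _, horder x hx⟩
  have hL1top : Subgroup.zpowers x ≠ ⊤ := by
    intro hcon
    have hcx := horder x hx
    rw [hcon, Subgroup.card_top, hcardT] at hcx
    exact hppn hcx
  obtain ⟨y, hy⟩ : ∃ y, y ∉ Subgroup.zpowers x := by
    by_contra hcon
    push_neg at hcon
    exact hL1top ((Subgroup.eq_top_iff' _).mpr hcon)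
  have hy1 : y ≠ 1 := fun h' => hy (h' ▸ Subgroup.one_mem _)
  have hL2 : Subgroup.zpowers y ∈ PT := Finset.mem_filter.mpr ⟨Finset.mem_univ _, horder y hy1⟩
  have hL12 : Subgroup.zpowers x ≠ Subgroup.zpowers y := by
    intro h'
    exact hy (by rw [h']; exact Subgroup.mem_zpowers y)
  -- common cardinality of preimages
  have key : ∀ L ∈ PT, Nat.card (Subgroup.comap φ L) * p = Nat.card K := by
    intro L hL
    have hidx : L.index = p := by
      have h1 := Subgroup.card_mul_index L
      rw [(Finset.mem_filter.mp hL).2, hcardT] at h1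
      exact Nat.eq_of_mul_eq_mul_left hp.pos h1
    have h2 := Subgroup.card_mul_index (Subgroup.comap φ L)
    rwa [L.index_comap_of_surjective hφ, hidx] at h2
  refine ⟨φ.ker, P, ⟨⟨?_, ?_, ?_, ?_⟩, ?_⟩⟩
  · -- 2 ≤ card
    refine Finset.one_lt_card.mpr ⟨_, Finset.mem_image_of_mem _ hL1, _,
      Finset.mem_image_of_mem _ hL2, fun hcon => hL12 (hinj hcon)⟩
  · -- proper
    intro Hm hm
    obtain ⟨L, hL, rfl⟩ := Finset.mem_image.mp hm
    intro hcon
    have hLtop : L = ⊤ := by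
      have hc := congrArg (Subgroup.map φ) hcon
      rwa [Subgroup.map_comap_eq, MonoidHom.range_eq_top.mpr hφ, top_inf_eq,
        ← MonoidHom.range_eq_map, MonoidHom.range_eq_top.mpr hφ] at hc
    have hcL := (Finset.mem_filter.mp hL).2
    rw [hLtop, Subgroup.card_top, hcardT] at hcL
    exact hppn hcL
  · -- cover
    intro g
    by_cases hg : φ g = 1
    · exact ⟨_, Finset.mem_image_of_mem _ hL1,
        Subgroup.mem_comap.mpr (by rw [hg]; exact Subgroup.one_mem _)⟩
    · exact ⟨_, Finset.mem_image_of_mem _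
        (Finset.mem_filter.mpr ⟨Finset.mem_univ _, horder _ hg⟩),
        Subgroup.mem_comap.mpr (Subgroup.mem_zpowers _)⟩
  · -- intersections
    intro H1 h1 H2 h2 hne
    obtain ⟨L1, hL1', rfl⟩ := Finset.mem_image.mp h1
    obtain ⟨L2, hL2', rfl⟩ := Finset.mem_image.mp h2
    have hLne : L1 ≠ L2 := fun h' => hne (by rw [h'])
    have hbot : L1 ⊓ L2 = ⊥ := by
      have hdvd : Nat.card (L1 ⊓ L2 : Subgroup T) ∣ p := by
        have hd := Subgroup.card_dvd_of_le (inf_le_left : L1 ⊓ L2 ≤ L1)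
        rwa [(Finset.mem_filter.mp hL1').2] at hd
      rcases (Nat.dvd_prime hp).mp hdvd with h1' | h1'
      · exact Subgroup.card_eq_one.mp h1'
      · exfalso
        apply hLne
        have e1 : L1 ⊓ L2 = L1 := Subgroup.eq_of_le_of_card_ge inf_le_left
          (by rw [(Finset.mem_filter.mp hL1').2, h1'])
        have e2 : L1 ⊓ L2 = L2 := Subgroup.eq_of_le_of_card_ge inf_le_right
          (by rw [(Finset.mem_filter.mp hL2').2, h1'])
        exact e1.symm.trans e2
    rw [← Subgroup.comap_inf, hbot, MonoidHom.comap_bot]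
  · -- equal cardinalities
    intro H1 h1 H2 h2
    obtain ⟨L1, hL1', rfl⟩ := Finset.mem_image.mp h1
    obtain ⟨L2, hL2', rfl⟩ := Finset.mem_image.mp h2
    have hc := (key _ hL1').trans (key _ hL2').symm
    exact Nat.eq_of_mul_eq_mul_right hp.pos hc

end Aux

theorem ESPartition_of_nilpotent {G : Type*} [Group G] [Finite G] [Group.IsNilpotent G] :
    ∀ H : Subgroup G, ¬ IsCyclic H →
      ∃ (S : Subgroup H) (P : Finset (Subgroup H)), IsESPartition S P := by
  intro H hH
  exact my_exists_ESPartition hH
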